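/- Let n ≥ 2. Let V be a complex vector space of dimension n² + 1 with basis (y₁, …, y_{n²}, x). Define two Lie algebra structures on V: g = gl_n(ℂ) ⊕ ℂ, where (y₁, …, y_{n²}) is identified with a basis of gl_n(ℂ) with the commutator bracket and x spans a central line; and n the solvable Lie algebra with brackets {x, y_i} = y_i for 1 ≤ i ≤ n² and {y_i, y_j} = 0. Then there exists a post-Lie algebra structure on the pair (g, n). One such structure is given by y_i · y_j = the matrix product of y_i and y_j in gl_n(ℂ), x·x = 0, y_i·x = 0, and x·y_i = −y_i. -/
import Mathlib


noncomputable section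

/-- A map `V → V → V` is ℂ-bilinear. -/
def IsBilin {V : Type*} [AddCommGroup V] [Module ℂ V] (f : V → V → V) : Prop :=
  (∀ (a : ℂ) (x y z : V), f (a • x + y) z = a • f x z + f y z) ∧
  (∀ (a : ℂ) (x y z : V), f x (a • y + z) = a • f x y + f x z)

/-- `f` is a Lie bracket on the complex vector space `V`. -/
def IsLieBracket {V : Type*} [AddCommGroup V] [Module ℂ V] (f : V → V → V) : Prop :=
  IsBilin f ∧ (∀ x, f x x = 0) ∧
  ∀ x y z, f x (f y z) + f y (f z x) + f z (f x y) = 0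

/-- `p` is a post-Lie algebra structure on the pair of Lie brackets `(g, n)` on `V`. -/
def IsPostLieStruct {V : Type*} [AddCommGroup V] [Module ℂ V]
    (g n p : V → V → V) : Prop :=
  IsBilin p ∧
  (∀ x y, p x y - p y x = g x y - n x y) ∧
  (∀ x y z, p (g x y) z = p x (p y z) - p y (p x z)) ∧
  (∀ x y z, p x (n y z) = n (p x y) z + n y (p x z))

/-- The underlying vector space of `gl_n(ℂ) ⊕ ℂ`, of dimension `n² + 1`; the basis
vectors `y₁, …, y_{n²}` span the matrix component and `x` spans the `ℂ`-component. -/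
abbrev glC (n : ℕ) := Matrix (Fin n) (Fin n) ℂ × ℂ

/-- The bracket of `g = gl_n(ℂ) ⊕ ℂ`: the commutator bracket on `gl_n(ℂ)` and a
central line spanned by `x`. -/
def glCBracket (n : ℕ) (u v : glC n) : glC n :=
  (u.1 * v.1 - v.1 * u.1, 0)

/-- The bracket of the solvable Lie algebra `n` with `{x, yᵢ} = yᵢ` for
`1 ≤ i ≤ n²` and `{yᵢ, yⱼ} = 0`; in coordinates `{(A, s), (B, t)} = (s B - t A, 0)`. -/
def solvBracket (n : ℕ) (u v : glC n) : glC n :=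
  (u.2 • v.1 - v.2 • u.1, 0)

/-- The product given by `yᵢ · yⱼ = yᵢ yⱼ` (matrix product), `x · x = 0`,
`yᵢ · x = 0` and `x · yᵢ = -yᵢ`; in coordinates
`(A, s) · (B, t) = (A B - s B, 0)`. -/
def glCProduct (n : ℕ) (u v : glC n) : glC n :=
  (u.1 * v.1 - u.2 • v.1, 0)

/-- For `n ≥ 2`, consider on the `(n² + 1)`-dimensional space
`gl_n(ℂ) × ℂ` the Lie brackets of `g = gl_n(ℂ) ⊕ ℂ` and of the solvable Lie algebra
`n` with `{x, yᵢ} = yᵢ`, `{yᵢ, yⱼ} = 0`. Then there exists a post-Lie algebra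
structure on the pair `(g, n)`; one such structure is
`yᵢ · yⱼ = yᵢ yⱼ` (matrix product), `x · x = 0`, `yᵢ · x = 0`, `x · yᵢ = -yᵢ`. -/
theorem postLie_on_glnC_solvable (n : ℕ) (hn : 2 ≤ n) :
    IsLieBracket (glCBracket n) ∧ IsLieBracket (solvBracket n) ∧
    IsPostLieStruct (glCBracket n) (solvBracket n) (glCProduct n) := by
  refine ⟨⟨⟨?_, ?_⟩, ?_, ?_⟩, ⟨⟨?_, ?_⟩, ?_, ?_⟩, ⟨?_, ?_⟩, ?_, ?_, ?_⟩ <;>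
    intros <;>
    simp only [glCBracket, solvBracket, glCProduct, Prod.ext_iff, Prod.fst_add,
      Prod.snd_add, Prod.smul_fst, Prod.smul_snd, smul_zero, add_zero, smul_sub,
      sub_smul, mul_sub, sub_mul, smul_mul_assoc, mul_smul_comm, smul_smul,
      Prod.mk_add_mk, Prod.mk_sub_mk, Prod.smul_mk, sub_self, zero_sub,
      Prod.fst_sub, Prod.snd_sub, mul_zero, zero_mul, zero_smul, sub_zero, mul_assoc, smul_eq_mul, Prod.fst_zero, Prod.snd_zero, add_mul, mul_add, add_smul, smul_add] <;>
    constructor <;> first | rfl | trivial | module
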